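/- Let A be a real symmetric n×n matrix all of whose off-diagonal entries are non-positive. Then A has a lowest eigenvalue whose eigenspace contains an eigenvector all of whose components are non-negative. -/

import Mathlib

open Matrix in
theorem stmt_0 (n : ℕ) (hn : 1 ≤ n) (A : Matrix (Fin n) (Fin n) ℝ)
    (hsymm : ∀ i j, A i j = A j i)
    (hoff : ∀ i j, i ≠ j → A i j ≤ 0) :
    ∃ (μ : ℝ) (v : Fin n → ℝ), v ≠ 0 ∧ A.mulVec v = μ • v ∧ (∀ i, 0 ≤ v i) ∧
      (∀ (μ' : ℝ) (w : Fin n → ℝ), w ≠ 0 → A.mulVec w = μ' • w → μ ≤ μ') := by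
  have hA : A.IsHermitian := by
    ext i j; simpa [Matrix.conjTranspose] using (hsymm j i)
  obtain ⟨i0, -, hmin⟩ := Finset.exists_min_image Finset.univ hA.eigenvalues
    ⟨⟨0, hn⟩, Finset.mem_univ _⟩
  set μ := hA.eigenvalues i0 with hμ
  -- B := A - μ • 1 is PSD
  set B : Matrix (Fin n) (Fin n) ℝ := A - μ • 1 with hB
  have hBdecomp : B = (hA.eigenvectorUnitary : Matrix (Fin n) (Fin n) ℝ) *
      Matrix.diagonal (fun i => hA.eigenvalues i - μ) *
      star (hA.eigenvectorUnitary : Matrix (Fin n) (Fin n) ℝ) := by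
    have hU : (hA.eigenvectorUnitary : Matrix (Fin n) (Fin n) ℝ) *
        star (hA.eigenvectorUnitary : Matrix (Fin n) (Fin n) ℝ) = 1 :=
      Matrix.mem_unitaryGroup_iff.mp hA.eigenvectorUnitary.2
    have hdiag : (Matrix.diagonal (fun i => hA.eigenvalues i - μ)) =
        Matrix.diagonal (RCLike.ofReal ∘ hA.eigenvalues) - μ • (1 : Matrix (Fin n) (Fin n) ℝ) := by
      ext i j
      by_cases h : i = j <;> simp [Matrix.diagonal_apply, h, Matrix.one_apply]
    calc B = (hA.eigenvectorUnitary : Matrix (Fin n) (Fin n) ℝ) *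
          Matrix.diagonal (RCLike.ofReal ∘ hA.eigenvalues) *
          star (hA.eigenvectorUnitary : Matrix (Fin n) (Fin n) ℝ) - μ •
          ((hA.eigenvectorUnitary : Matrix (Fin n) (Fin n) ℝ) *
          star (hA.eigenvectorUnitary : Matrix (Fin n) (Fin n) ℝ)) := by
          have hs := hA.spectral_theorem
          rw [Unitary.conjStarAlgAut_apply] at hs
          rw [hU, ← hs]
      _ = _ := by
          rw [hdiag, Matrix.mul_sub, Matrix.sub_mul, mul_smul_comm, Matrix.mul_one,
            smul_mul_assoc]
  have hBpsd : B.PosSemidef := by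
    rw [hBdecomp]
    exact (Matrix.posSemidef_diagonal_iff.mpr fun i => sub_nonneg.mpr
      (hmin i (Finset.mem_univ i))).mul_mul_conjTranspose_same _
  have hray : ∀ x : Fin n → ℝ, μ * (x ⬝ᵥ x) ≤ x ⬝ᵥ A.mulVec x := by
    intro x
    have h0 := hBpsd.dotProduct_mulVec_nonneg x
    have hx : star x ⬝ᵥ B.mulVec x = x ⬝ᵥ A.mulVec x - μ * (x ⬝ᵥ x) := by
      simp [hB, Matrix.sub_mulVec, Matrix.smul_mulVec, dotProduct_sub,
        dotProduct_smul, smul_eq_mul, star_trivial]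
    rw [hx] at h0; linarith
  -- the eigenvector for μ and its componentwise absolute value
  set u : Fin n → ℝ := ⇑(hA.eigenvectorBasis i0) with hu
  have hAu : A.mulVec u = μ • u := hA.mulVec_eigenvectorBasis i0
  have hune : u ≠ 0 := by
    intro h
    exact hA.eigenvectorBasis.orthonormal.ne_zero i0 (by ext i; exact congrFun h i)
  set v : Fin n → ℝ := fun i => |u i| with hv
  have hvne : v ≠ 0 := by
    intro h
    apply hune
    funext i
    have := congrFun h i
    simpa [hv, abs_eq_zero] using this
  have hvv : v ⬝ᵥ v = u ⬝ᵥ u := by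
    simp only [dotProduct, hv]
    exact Finset.sum_congr rfl fun i _ => by rw [abs_mul_abs_self]
  have hkey : v ⬝ᵥ A.mulVec v ≤ u ⬝ᵥ A.mulVec u := by
    simp only [dotProduct, Matrix.mulVec, Finset.mul_sum]
    apply Finset.sum_le_sum
    intro i _
    apply Finset.sum_le_sum
    intro j _
    by_cases h : i = j
    · subst h
      simp only [hv]
      have h3 : |u i| * (A i i * |u i|) = u i * (A i i * u i) := by
        rw [mul_comm (A i i), ← mul_assoc, abs_mul_abs_self]; ring
      exact le_of_eq h3
    · have h1 : A i j ≤ 0 := hoff i j h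
      have h2 : u i * u j ≤ |u i| * |u j| := by
        calc u i * u j ≤ |u i * u j| := le_abs_self _
          _ = |u i| * |u j| := abs_mul _ _
      simp only [hv]; nlinarith
  have huAu : u ⬝ᵥ A.mulVec u = μ * (u ⬝ᵥ u) := by
    rw [hAu]; simp [dotProduct_smul, smul_eq_mul]
  have heq : v ⬝ᵥ A.mulVec v = μ * (v ⬝ᵥ v) := by
    have := hray v
    rw [hvv]; linarith [hkey, huAu, hvv ▸ hray v]
  have hBv : B.mulVec v = 0 := by
    rw [← hBpsd.dotProduct_mulVec_zero_iff]
    have : star v ⬝ᵥ B.mulVec v = v ⬝ᵥ A.mulVec v - μ * (v ⬝ᵥ v) := by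
      simp [hB, Matrix.sub_mulVec, Matrix.smul_mulVec, dotProduct_sub,
        dotProduct_smul, smul_eq_mul, star_trivial]
    rw [this, heq]; ring
  have hAv : A.mulVec v = μ • v := by
    have h := hBv
    rw [hB, Matrix.sub_mulVec, Matrix.smul_mulVec, Matrix.one_mulVec, sub_eq_zero] at h
    exact h
  refine ⟨μ, v, hvne, hAv, fun i => abs_nonneg _, ?_⟩
  intro μ' w hw hAw
  have hww : 0 < w ⬝ᵥ w := by
    have hnn : 0 ≤ w ⬝ᵥ w := Finset.sum_nonneg fun i _ => mul_self_nonneg (w i)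
    rcases lt_or_eq_of_le hnn with h | h
    · exact h
    · exact absurd ((dotProduct_self_eq_zero).mp h.symm) hw
  have := hray w
  rw [hAw] at this
  simp only [dotProduct_smul, smul_eq_mul] at this
  exact le_of_mul_le_mul_right (by linarith) hww
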